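/- Let 𝔤 be a real Lie algebra equipped with an ad-invariant inner product. Suppose X, A, W ∈ 𝔤 satisfy: ⁅X, A⁆ ≠ 0; W ≠ 0; ⁅X, W⁆ = 0; and, if ⁅W, ⁅X, A⁆⁆ = 0 then W is a real scalar multiple of ⁅X, A⁆. Then ⁅X, ⁅A, W⁆⁆ ≠ 0. -/

import Mathlib

open scoped RealInnerProductSpace

/-- In a Lie ring, antisymmetry of the bracket. -/
lemma stmt2_aux_skew {L : Type*} [LieRing L] {x y : L} (h : ⁅x, y⁆ = 0) :
    ⁅y, x⁆ = 0 := by rw [← lie_skew, h, neg_zero]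

/-- In a Lie ring (any additive group), cancellation. -/
lemma stmt2_aux_cancel {L : Type*} [LieRing L] {a b : L} (h : b = a + b) : a = 0 := by
  have h' : a + b = 0 + b := by rw [← h, zero_add]
  exact add_right_cancel h'

/-- Core argument of part (3) of Theorem 2.2: in a real Lie algebra with an
ad-invariant inner product, if ⁅X,A⁆ ≠ 0, W ≠ 0, ⁅X,W⁆ = 0, and whenever
⁅W,⁅X,A⁆⁆ = 0 the vector W is a real multiple of ⁅X,A⁆, then ⁅X,⁅A,W⁆⁆ ≠ 0. -/
theorem stmt2 (L : Type*) [LieRing L] [LieAlgebra ℝ L]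
    [NormedAddCommGroup L] [InnerProductSpace ℝ L]
    (had : ∀ a b c : L, ⟪⁅a, b⁆, c⟫ = -⟪b, ⁅a, c⁆⟫)
    (X A W : L)
    (h1 : ⁅X, A⁆ ≠ 0) (h2 : W ≠ 0) (h3 : ⁅X, W⁆ = 0)
    (h4 : ⁅W, ⁅X, A⁆⁆ = 0 → ∃ lam : ℝ, W = lam • ⁅X, A⁆) :
    ⁅X, ⁅A, W⁆⁆ ≠ 0 := by
  intro h0
  -- The bracket is ℝ-linear in its second slot w.r.t. the *normed* structure,
  -- thanks to ad-invariance and nondegeneracy of the inner product.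
  have hsmul : ∀ (t : ℝ) (a c : L), ⁅a, t • c⁆ = t • ⁅a, c⁆ := by
    intro t a c
    refine ext_inner_left ℝ fun b => ?_
    have e1 := had a b (t • c)
    have e2 := had a b c
    rw [lie_smul]
  -- bracket with the normed zero on the right vanishes
  have lzN : ∀ a : L, ⁅a, (0 : L)⁆ = 0 := by
    intro a
    have h := hsmul 0 a 0
    rwa [zero_smul, zero_smul] at h
  -- the Lie-ring zero coincides with the normed zero
  have hz0 : ⁅(0 : L), (0 : L)⁆ = (0 : L) := by
    exact LieRing.lie_self _
  have e : _ = (0 : L) := (LieRing.lie_self (0 : L)).symm.trans hz0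
  -- Jacobi identity (over the Lie-ring structure) gives ⁅⁅X,A⁆,W⁆ = 0
  have hjac := LieRing.leibniz_lie X A W
  rw [h0, h3, lzN A] at hjac
  -- hjac : 0 = ⁅⁅X,A⁆,W⁆ +ᴸ 0  (normed zeros); convert zeros to Lie-ring zeros
  rw [← e] at hjac
  have hXAW : ⁅⁅X, A⁆, W⁆ = (0 : L) := (stmt2_aux_cancel hjac).trans e
  -- antisymmetry gives ⁅W,⁅X,A⁆⁆ = 0
  have hj : ⁅W, ⁅X, A⁆⁆ = (0 : L) :=
    (stmt2_aux_skew (hXAW.trans e.symm)).trans e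
  obtain ⟨lam, hlam⟩ := h4 hj
  have hlne : lam ≠ 0 := by
    rintro rfl; rw [zero_smul] at hlam; exact h2 hlam
  have hXXA : ⁅X, ⁅X, A⁆⁆ = 0 := by
    have h : ⁅X, W⁆ = lam • ⁅X, ⁅X, A⁆⁆ := by rw [hlam, hsmul]
    rw [h3] at h
    exact (smul_eq_zero.mp h.symm).resolve_left hlne
  have e' := inner_self_eq_zero.mp (show ⟪(0 : L), (0 : L)⟫ = 0 by
    have h := had (0 : L) (0 : L) (0 : L)
    rw [zero_lie] at h
    linarith)
  have hz : ⟪⁅X, A⁆, ⁅X, A⁆⟫ = 0 := by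
    rw [had, hXXA, e', inner_zero_right, neg_zero]
  exact h1 ((inner_self_eq_zero.mp hz).trans e'.symm)
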